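/- For every compact metric space K and every Abelian group G, the cohomological dimension satisfies dim_G K ≤ dim K. -/

import Mathlib

open Filter Set
open scoped ENNReal

namespace MeanDimPaper

variable {X : Type*} [TopologicalSpace X]

/-- `α` is an open cover of `X`. -/
def IsOpenCover (α : Set (Set X)) : Prop :=
  (∀ U ∈ α, IsOpen U) ∧ ⋃₀ α = Set.univ

/-- The order of a cover `α`: the maximum `n ≥ 0` such that there exist `n + 1`
pairwise distinct members of `α` with nonempty common intersection. -/
noncomputable def ord (α : Set (Set X)) : ℕ∞ :=
  ⨆ n ∈ {n : ℕ | ∃ f : Fin (n + 1) → Set X,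
      Function.Injective f ∧ (∀ i, f i ∈ α) ∧ (⋂ i, f i).Nonempty}, (n : ℕ∞)

/-- `β` refines `α`: every member of `β` is contained in some member of `α`. -/
def Refines (β α : Set (Set X)) : Prop := ∀ V ∈ β, ∃ U ∈ α, V ⊆ U

/-- `D(α)`: the minimum of `ord β` over open covers `β` refining `α`. -/
noncomputable def covD (α : Set (Set X)) : ℕ∞ :=
  ⨅ β ∈ {β : Set (Set X) | IsOpenCover β ∧ Refines β α}, ord β

/-- Topological (covering) dimension: the supremum of `D(α)` over open covers `α`. -/
noncomputable def topDim (X : Type*) [TopologicalSpace X] : ℕ∞ :=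
  ⨆ α ∈ {α : Set (Set X) | IsOpenCover α}, covD α

/-- Diameter of a set with respect to a distance function `d`. -/
noncomputable def diamD (d : X → X → ℝ) (U : Set X) : ℝ :=
  sSup {r | ∃ x ∈ U, ∃ y ∈ U, r = d x y}

/-- Mesh of a cover: the supremum of the diameters of its members. -/
noncomputable def mesh (d : X → X → ℝ) (α : Set (Set X)) : ℝ :=
  sSup (diamD d '' α)

/-- `widim_ε(X, d)`: the minimum of `D(α)` over open covers `α` with `mesh(α, d) < ε`. -/
noncomputable def widim (ε : ℝ) (d : X → X → ℝ) : ℕ∞ :=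
  ⨅ α ∈ {α : Set (Set X) | IsOpenCover α ∧ mesh d α < ε}, covD α

/-- `d` is a metric on `X` compatible with the topology of `X`. -/
structure IsCompatMetric {X : Type*} [TopologicalSpace X] (d : X → X → ℝ) : Prop where
  refl : ∀ x, d x x = 0
  eq_of : ∀ x y, d x y = 0 → x = y
  symm : ∀ x y, d x y = d y x
  triangle : ∀ x y z, d x z ≤ d x y + d y z
  isOpen_iff : ∀ U : Set X, IsOpen U ↔ ∀ x ∈ U, ∃ ε > 0, ∀ y, d x y < ε → y ∈ U

/-- The dynamical distance `d_n(x, y) = max_{0 ≤ i < n} d(Tⁱ x, Tⁱ y)`. -/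
noncomputable def dynDist (d : X → X → ℝ) (T : X → X) (n : ℕ) (x y : X) : ℝ :=
  sSup {r | ∃ i < n, r = d (T^[i] x) (T^[i] y)}

/-- Mean dimension `mdim(X, T)` computed with the metric `d`:
`lim_{ε → 0} lim_{n → ∞} widim_ε(X, d_n) / n`.  The inner limit exists (by
subadditivity of `n ↦ widim_ε(X, d_n)`) so it coincides with the liminf, and the inner
quantity is monotone as `ε` decreases, so the limit as `ε → 0` is the supremum over
`ε > 0`. -/
noncomputable def mdim (T : X → X) (d : X → X → ℝ) : ℝ≥0∞ :=
  ⨆ (ε : ℝ) (_ : 0 < ε),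
    Filter.liminf (fun n : ℕ => (widim ε (dynDist d T n) : ℝ≥0∞) / (n : ℝ≥0∞)) Filter.atTop

/-- The full shift `σ` on the alphabet `K`: `σ((xₙ)ₙ) = (xₙ₊₁)ₙ`. -/
def shift (K : Type*) : (ℤ → K) → ℤ → K := fun x n => x (n + 1)

variable {K : Type*} [TopologicalSpace K]

/-- An ordered `q`-simplex of the nerve complex `N(α)`: a `(q+1)`-tuple of members of `α`
with nonempty common intersection. -/
def IsNerveSimplex (α : Set (Set K)) {q : ℕ} (f : Fin (q + 1) → Set K) : Prop :=
  (∀ i, f i ∈ α) ∧ (⋂ i, f i).Nonempty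

/-- The type of ordered `q`-simplices of the nerve `N(α)`. -/
def NerveSimplex (α : Set (Set K)) (q : ℕ) : Type _ :=
  {f : Fin (q + 1) → Set K // IsNerveSimplex α f}

/-- The `i`-th face of a `(q+1)`-simplex of the nerve. -/
def face {α : Set (Set K)} {q : ℕ} (g : NerveSimplex α (q + 1)) (i : Fin (q + 2)) :
    NerveSimplex α q :=
  ⟨g.1 ∘ i.succAbove, ⟨fun j => g.2.1 _, by
    obtain ⟨x, hx⟩ := g.2.2
    exact ⟨x, Set.mem_iInter.2 fun j => Set.mem_iInter.1 hx _⟩⟩⟩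

/-- A simplex of `N(α)` belongs to the subcomplex `N(α|_A)` iff the common intersection
of its members meets `A`. -/
def InSubNerve (A : Set K) {α : Set (Set K)} {q : ℕ} (f : NerveSimplex α q) : Prop :=
  ((⋂ i, f.1 i) ∩ A).Nonempty

/-- A relative cochain of the pair `(N(α), N(α|_A))`: a `G`-valued simplicial cochain on
`N(α)` vanishing on the subcomplex `N(α|_A)`. -/
def IsRelCochain (A : Set K) {α : Set (Set K)} {q : ℕ} {G : Type*} [AddCommGroup G]
    (c : NerveSimplex α q → G) : Prop :=
  ∀ f, InSubNerve A f → c f = 0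

/-- The simplicial coboundary operator. -/
def cob {α : Set (Set K)} {q : ℕ} {G : Type*} [AddCommGroup G]
    (c : NerveSimplex α q → G) (g : NerveSimplex α (q + 1)) : G :=
  ∑ i : Fin (q + 2), (-1 : ℤ) ^ (i : ℕ) • c (face g i)

/-- A relative `q`-cocycle of the pair `(N(α), N(α|_A))` with coefficients in `G`. -/
def IsRelCocycle (A : Set K) {α : Set (Set K)} {q : ℕ} {G : Type*} [AddCommGroup G]
    (c : NerveSimplex α q → G) : Prop :=
  IsRelCochain A c ∧ ∀ g : NerveSimplex α (q + 1), cob c g = 0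

/-- A relative `q`-coboundary of the pair `(N(α), N(α|_A))` with coefficients in `G`. -/
def IsRelCoboundary (A : Set K) {α : Set (Set K)} {G : Type*} [AddCommGroup G] :
    (q : ℕ) → (NerveSimplex α q → G) → Prop
  | 0, c => ∀ f, c f = 0
  | _ + 1, c => ∃ b, IsRelCochain A b ∧ ∀ g, cob b g = c g

/-- The simplicial map `N(β) → N(α)` induced by a choice `r` assigning to each member of
the refinement `β` a member of `α` containing it. -/
def simplexMap {α β : Set (Set K)} (r : Set K → Set K)
    (hr : ∀ V ∈ β, V ⊆ r V ∧ r V ∈ α) {q : ℕ} (g : NerveSimplex β q) :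
    NerveSimplex α q :=
  ⟨fun i => r (g.1 i), ⟨fun i => (hr _ (g.2.1 i)).2, by
    obtain ⟨x, hx⟩ := g.2.2
    exact ⟨x, Set.mem_iInter.2 fun i => (hr _ (g.2.1 i)).1 (Set.mem_iInter.1 hx i)⟩⟩⟩

/-- "The natural map `H^q(N(α), N(α|_A); G) → Ȟ^q(K, A; G)` is nonzero."
Since the Čech cohomology `Ȟ^q(K, A; G)` is the directed colimit of the cohomologies of
the nerve pairs over refinement, this map is nonzero iff some relative `q`-cocycle `c`
on `(N(α), N(α|_A))` has the property that, for every open cover `β` refining `α`, the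
pullback of `c` along any choice of induced simplicial map `N(β) → N(α)` is not a
relative coboundary (all such choices induce the same map on cohomology). -/
def NerveToCechNonzero (α : Set (Set K)) (A : Set K) (G : Type*) [AddCommGroup G]
    (q : ℕ) : Prop :=
  ∃ c : NerveSimplex α q → G, IsRelCocycle A c ∧
    ∀ β : Set (Set K), IsOpenCover β → Refines β α →
      ∀ (r : Set K → Set K) (hr : ∀ V ∈ β, V ⊆ r V ∧ r V ∈ α),
        ¬ IsRelCoboundary A q (fun g : NerveSimplex β q => c (simplexMap r hr g))

/-- Cohomological dimension `dim_G K`: the supremum of all `q ≥ 0` such that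
`Ȟ^q(K, A; G) ≠ 0` for some closed subset `A ⊆ K`.  An element of the colimit
`Ȟ^q(K, A; G)` is nonzero iff it is represented at some stage `α` by a cocycle class
with nonzero image in the colimit. -/
noncomputable def cohomDim (G : Type*) [AddCommGroup G] (K : Type*) [TopologicalSpace K] :
    ℕ∞ :=
  ⨆ q ∈ {q : ℕ | ∃ A : Set K, IsClosed A ∧
      ∃ α : Set (Set K), IsOpenCover α ∧ NerveToCechNonzero α A G q}, (q : ℕ∞)

namespace Aux

open Finsupp

variable {V : Type*}

abbrev Tup (V : Type*) (n : ℕ) := Fin (n + 1) → V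
abbrev Ch (V : Type*) (n : ℕ) := Tup V n →₀ ℤ

lemma succAbove_val {n : ℕ} (p : Fin (n + 1)) (i : Fin n) :
    ((p.succAbove i : Fin (n + 1)) : ℕ) = if (i : ℕ) < (p : ℕ) then (i : ℕ) else (i : ℕ) + 1 := by
  rw [Fin.succAbove]
  split_ifs with h h' h'
  · rfl
  · exact absurd h h'
  · exact absurd h' h
  · rfl

noncomputable def bdyGen {n : ℕ} (f : Tup V (n + 1)) : Ch V n :=
  ∑ i : Fin (n + 2), ((-1 : ℤ) ^ (i : ℕ)) • Finsupp.single (f ∘ i.succAbove) 1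

noncomputable def bdy {n : ℕ} : Ch V (n + 1) →ₗ[ℤ] Ch V n :=
  Finsupp.linearCombination ℤ bdyGen

lemma lcomb_single_one {α M : Type*} [AddCommGroup M] [Module ℤ M] (v : α → M) (a : α) :
    Finsupp.linearCombination ℤ v (Finsupp.single a 1) = v a := by
  rw [Finsupp.linearCombination_single]
  exact (Module.toDistribMulAction (R := ℤ) (M := M)).toMulAction.one_smul (v a)

lemma bdy_single {n : ℕ} (f : Tup V (n + 1)) :
    bdy (Finsupp.single f 1) = bdyGen f := lcomb_single_one _ _

lemma lin_apply {α M : Type*} [AddCommGroup M] [Module ℤ M] (F : (α →₀ ℤ) →ₗ[ℤ] M) (x : α →₀ ℤ) :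
    F x = x.sum fun g c => c • F (Finsupp.single g 1) := by
  conv_lhs => rw [← Finsupp.sum_single x]
  rw [map_finsuppSum]
  apply Finsupp.sum_congr
  intro g _
  rw [← Finsupp.smul_single_one, LinearMap.map_smul]
  simpa using Int.cast_smul_eq_zsmul ℤ (x g) (F (Finsupp.single g 1))

lemma lin_eq_on {α M : Type*} [AddCommGroup M] [Module ℤ M] (F G : (α →₀ ℤ) →ₗ[ℤ] M)
    (x : α →₀ ℤ) (h : ∀ g ∈ x.support, F (Finsupp.single g 1) = G (Finsupp.single g 1)) :
    F x = G x := by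
  rw [lin_apply F, lin_apply G]
  apply Finsupp.sum_congr
  intro g hg
  rw [h g hg]

lemma lin_eq_zero_on {α M : Type*} [AddCommGroup M] [Module ℤ M] (F : (α →₀ ℤ) →ₗ[ℤ] M)
    (x : α →₀ ℤ) (h : ∀ g ∈ x.support, F (Finsupp.single g 1) = 0) :
    F x = 0 := by
  rw [lin_apply F, Finsupp.sum]
  apply Finset.sum_eq_zero
  intro g hg
  rw [h g hg]
  exact zsmul_zero _

lemma sum_pairs_zero {n : ℕ} {M : Type*} [AddCommGroup M] (F : Fin (n + 3) × Fin (n + 2) → M)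
    (hkey : ∀ (i : Fin (n + 3)) (j : Fin (n + 2)) (_ : (i : ℕ) ≤ (j : ℕ)),
      F (i, j) + F (⟨(j : ℕ) + 1, by have := j.isLt; omega⟩,
        ⟨(i : ℕ), by have := j.isLt; omega⟩) = 0) :
    ∑ p ∈ Finset.univ ×ˢ Finset.univ, F p = 0 := by
  apply Finset.sum_ninvolution
    (g := fun p : Fin (n + 3) × Fin (n + 2) =>
      if h : (p.2 : ℕ) < (p.1 : ℕ) then
        (⟨(p.2 : ℕ), by have := p.2.isLt; omega⟩, ⟨(p.1 : ℕ) - 1, by have := p.1.isLt; omega⟩)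
      else (⟨(p.2 : ℕ) + 1, by have := p.2.isLt; omega⟩,
        ⟨(p.1 : ℕ), by have := p.2.isLt; omega⟩))
  · intro ⟨i, j⟩
    by_cases h : (j : ℕ) < (i : ℕ)
    · rw [dif_pos h]
      have hkey' := hkey ⟨(j : ℕ), by have := j.isLt; omega⟩
        ⟨(i : ℕ) - 1, by have := i.isLt; omega⟩ (by simp only [Fin.val_mk]; omega)
      have e1 : (⟨((⟨(i : ℕ) - 1, by have := i.isLt; omega⟩ : Fin (n + 2)) : ℕ) + 1,
          by simp only [Fin.val_mk]; omega⟩ : Fin (n + 3)) = i := by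
        apply Fin.ext; simp only [Fin.val_mk]; omega
      have e2 : (⟨((⟨(j : ℕ), by have := j.isLt; omega⟩ : Fin (n + 3)) : ℕ),
          by simp only [Fin.val_mk]; have := j.isLt; omega⟩ : Fin (n + 2)) = j := by
        apply Fin.ext; simp only [Fin.val_mk]
      rw [e1, e2] at hkey'
      rw [add_comm]
      exact hkey'
    · rw [dif_neg h]
      exact hkey i j (by omega)
  · intro ⟨i, j⟩ _ hc
    by_cases h : (j : ℕ) < (i : ℕ)
    · rw [dif_pos h] at hc
      have := congrArg (fun p => ((p.1 : Fin (n + 3)) : ℕ)) hc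
      simp only [Fin.val_mk] at this
      omega
    · rw [dif_neg h] at hc
      have := congrArg (fun p => ((p.1 : Fin (n + 3)) : ℕ)) hc
      simp only [Fin.val_mk] at this
      omega
  · intro _; simp
  · intro ⟨i, j⟩
    by_cases h : (j : ℕ) < (i : ℕ)
    · rw [dif_pos h]
      rw [dif_neg (by simp only [Fin.val_mk]; omega)]
      apply Prod.ext <;> apply Fin.ext <;> simp only [Fin.val_mk] <;> omega
    · rw [dif_neg h]
      rw [dif_pos (by simp only [Fin.val_mk]; omega)]
      apply Prod.ext <;> apply Fin.ext <;> simp only [Fin.val_mk] <;> omega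

/-- `∂∂ = 0` on generators. -/
lemma bdy_bdyGen {n : ℕ} (f : Tup V (n + 2)) : bdy (bdyGen f) = 0 := by
  rw [bdyGen, map_sum]
  simp_rw [map_smul, bdy_single, bdyGen, Finset.smul_sum, smul_smul, ← pow_add]
  rw [← Finset.sum_product']
  apply sum_pairs_zero
  intro i j hij
  dsimp only
  have hfun : (f ∘ (⟨(j : ℕ) + 1, by have := j.isLt; omega⟩ : Fin (n + 3)).succAbove) ∘
      (⟨(i : ℕ), by have := j.isLt; omega⟩ : Fin (n + 2)).succAbove
      = (f ∘ i.succAbove) ∘ j.succAbove := by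
    funext x
    simp only [Function.comp_apply]
    congr 1
    apply Fin.ext
    simp only [succAbove_val, Fin.val_mk]
    split_ifs <;> omega
  rw [hfun]
  try simp only [Fin.val_mk]
  rw [show (j : ℕ) + 1 + (i : ℕ) = ((i : ℕ) + (j : ℕ)) + 1 by omega, pow_succ, mul_neg_one,
    neg_smul, add_neg_cancel]


/-! ### Cones -/

noncomputable def coneGen (v : V) {n : ℕ} (f : Tup V n) : Ch V (n + 1) :=
  Finsupp.single (Fin.cons v f) 1

noncomputable def cone (v : V) {n : ℕ} : Ch V n →ₗ[ℤ] Ch V (n + 1) :=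
  Finsupp.linearCombination ℤ (coneGen v)

open Classical in
noncomputable def cone'Gen (v : V) {n : ℕ} (f : Tup V n) : Ch V (n + 1) :=
  if v ∈ Set.range f then 0 else Finsupp.single (Fin.cons v f) 1

noncomputable def cone' (v : V) {n : ℕ} : Ch V n →ₗ[ℤ] Ch V (n + 1) :=
  Finsupp.linearCombination ℤ (cone'Gen v)

lemma cons_comp_zero {n : ℕ} (v : V) (f : Tup V n) :
    (Fin.cons v f : Fin (n + 2) → V) ∘ (Fin.succAbove 0) = f := by
  funext j
  simp [Fin.zero_succAbove]

lemma cons_comp_succ {n : ℕ} (v : V) (f : Tup V (n + 1)) (i : Fin (n + 2)) :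
    (Fin.cons v f : Fin (n + 3) → V) ∘ (Fin.succAbove i.succ) = Fin.cons v (f ∘ i.succAbove) := by
  funext j
  induction j using Fin.cases with
  | zero =>
    simp only [Function.comp_apply, Fin.succAbove_ne_zero_zero (Fin.succ_ne_zero i), Fin.cons_zero]
  | succ k =>
    simp only [Function.comp_apply, Fin.succ_succAbove_succ, Fin.cons_succ]

lemma bdy_coneGen {n : ℕ} (v : V) (f : Tup V (n + 1)) :
    bdy (coneGen v f) = Finsupp.single f 1 - cone v (bdyGen f) := by
  rw [coneGen, bdy_single]
  rw [show bdyGen (Fin.cons v f : Fin (n + 3) → V) =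
    ∑ i : Fin (n + 3), ((-1 : ℤ) ^ (i : ℕ)) •
      Finsupp.single ((Fin.cons v f : Fin (n + 3) → V) ∘ i.succAbove) 1 from rfl]
  rw [Fin.sum_univ_succ]
  rw [cons_comp_zero]
  simp only [Fin.val_zero, pow_zero, one_smul, Fin.val_succ, cons_comp_succ]
  rw [bdyGen, map_sum]
  simp_rw [map_smul]
  rw [sub_eq_add_neg, ← Finset.sum_neg_distrib]
  congr 1
  apply Finset.sum_congr rfl
  intro i _
  rw [cone, lcomb_single_one]
  rw [coneGen, pow_succ, mul_comm, neg_one_mul, neg_smul]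

lemma bdy_cone {n : ℕ} (v : V) (x : Ch V (n + 1)) :
    bdy (cone v x) = x - cone v (bdy x) := by
  have h : (bdy.comp (cone v) : Ch V (n + 1) →ₗ[ℤ] Ch V (n + 1))
      = LinearMap.id - (cone v).comp bdy := by
    apply Finsupp.lhom_ext
    intro a b
    simp only [LinearMap.comp_apply, LinearMap.sub_apply, LinearMap.id_apply]
    rw [← Finsupp.smul_single_one, LinearMap.map_smul, LinearMap.map_smul, LinearMap.map_smul,
      LinearMap.map_smul]
    rw [cone, lcomb_single_one, bdy_single, bdy_coneGen]
    rw [smul_sub]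
  have h2 := LinearMap.congr_fun h x
  simp only [LinearMap.comp_apply, LinearMap.sub_apply, LinearMap.id_apply] at h2
  exact h2

/-! ### Well-order, sortedness -/

noncomputable def mv {n : ℕ} (f : Tup V n) : V :=
  (IsWellFounded.wf : WellFounded (@WellOrderingRel V)).min (Set.range f) (Set.range_nonempty f)

lemma mv_mem {n : ℕ} (f : Tup V n) : mv f ∈ Set.range f := WellFounded.min_mem _ _ _

lemma mv_min {n : ℕ} (f : Tup V n) {x : V} (hx : x ∈ Set.range f) :
    ¬ WellOrderingRel x (mv f) := WellFounded.not_lt_min _ _ hx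

lemma mv_le {n : ℕ} (f : Tup V n) {x : V} (hx : x ∈ Set.range f) :
    x = mv f ∨ WellOrderingRel (mv f) x := by
  rcases trichotomous_of WellOrderingRel x (mv f) with h | h | h
  · exact absurd h (mv_min f hx)
  · exact Or.inl h
  · exact Or.inr h

def Srt {n : ℕ} (g : Tup V n) : Prop :=
  ∀ i j : Fin (n + 1), i < j → WellOrderingRel (g i) (g j)

lemma srt_zero (g : Tup V 0) : Srt g := by
  intro i j hij
  exact absurd (Fin.lt_def.mp hij) (by omega)

lemma Srt.injective {n : ℕ} {g : Tup V n} (h : Srt g) : Function.Injective g := by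
  intro i j he
  rcases lt_trichotomy i j with hc | hc | hc
  · have h1 := h i j hc
    rw [he] at h1
    exact absurd h1 (irrefl_of _ _)
  · exact hc
  · have h1 := h j i hc
    rw [he] at h1
    exact absurd h1 (irrefl_of _ _)

lemma srt_cons {n : ℕ} {v : V} {t : Tup V n} (hs : Srt t)
    (hv : ∀ u ∈ Set.range t, WellOrderingRel v u) :
    Srt (Fin.cons v t : Fin (n + 2) → V) := by
  intro i j hij
  induction j using Fin.cases with
  | zero => exact absurd hij (Fin.not_lt_zero i)
  | succ k =>
    induction i using Fin.cases with
    | zero =>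
      rw [Fin.cons_zero, Fin.cons_succ]
      exact hv (t k) ⟨k, rfl⟩
    | succ l =>
      rw [Fin.cons_succ, Fin.cons_succ]
      exact hs l k (by rwa [Fin.succ_lt_succ_iff] at hij)

/-! ### Support lemmas -/

lemma bdyGen_supp {n : ℕ} (f : Tup V (n + 1)) :
    ∀ g ∈ (bdyGen f).support, ∃ i : Fin (n + 2), g = f ∘ i.succAbove := by
  intro g hg
  rw [bdyGen] at hg
  obtain ⟨i, _, hi⟩ := Finsupp.mem_support_finset_sum g hg
  have h2 := Finsupp.support_single_subset (Finsupp.support_smul hi)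
  exact ⟨i, Finset.mem_singleton.mp h2⟩

lemma suppIn_lin {α β' : Type*} (F : (α →₀ ℤ) →ₗ[ℤ] (β' →₀ ℤ)) {P : α → Prop} {Q : β' → Prop}
    (x : α →₀ ℤ) (hx : ∀ g ∈ x.support, P g)
    (hF : ∀ g, P g → ∀ t ∈ (F (Finsupp.single g 1)).support, Q t) :
    ∀ t ∈ (F x).support, Q t := by
  intro t ht
  rw [lin_apply F, Finsupp.sum] at ht
  obtain ⟨a, ha, hta⟩ := Finsupp.mem_support_finset_sum t ht
  exact hF a (hx a ha) t (Finsupp.support_smul hta)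

/-! ### The projection π and homotopy h -/

noncomputable def piGen : (n : ℕ) → Tup V n → Ch V n
  | 0, f => Finsupp.single f 1
  | n + 1, f => cone' (mv f) (Finsupp.linearCombination ℤ (piGen n) (bdyGen f))

noncomputable def piL (n : ℕ) : Ch V n →ₗ[ℤ] Ch V n := Finsupp.linearCombination ℤ (piGen n)

lemma piL_single {n : ℕ} (f : Tup V n) : piL n (Finsupp.single f 1) = piGen n f :=
  lcomb_single_one _ _

lemma piGen_succ (n : ℕ) (f : Tup V (n + 1)) :
    piGen (n + 1) f = cone' (mv f) (piL n (bdyGen f)) := rfl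

lemma piL_zero_apply (x : Ch V 0) : piL 0 x = x := by
  have : piL 0 x = (LinearMap.id : Ch V 0 →ₗ[ℤ] Ch V 0) x := by
    apply lin_eq_on
    intro g _
    rw [piL_single]
    rfl
  simpa using this

noncomputable def hGen : (n : ℕ) → Tup V n → Ch V (n + 1)
  | 0, _ => 0
  | n + 1, f => cone (f 0)
      (Finsupp.single f 1 - piGen (n + 1) f - Finsupp.linearCombination ℤ (hGen n) (bdyGen f))

noncomputable def hL (n : ℕ) : Ch V n →ₗ[ℤ] Ch V (n + 1) := Finsupp.linearCombination ℤ (hGen n)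

lemma hL_single {n : ℕ} (f : Tup V n) : hL n (Finsupp.single f 1) = hGen n f :=
  lcomb_single_one _ _

lemma hGen_succ (n : ℕ) (f : Tup V (n + 1)) :
    hGen (n + 1) f = cone (f 0) (Finsupp.single f 1 - piGen (n + 1) f - hL n (bdyGen f)) := rfl

lemma hL_zero_apply (x : Ch V 0) : hL 0 x = 0 :=
  lin_eq_zero_on _ x (fun g _ => by rw [hL_single]; rfl)

/-! ### Carrier lemmas -/

lemma piGen_supp : ∀ (n : ℕ) (f : Tup V n), ∀ g ∈ (piGen n f).support,
    Srt g ∧ Set.range g ⊆ Set.range f := by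
  intro n
  induction n with
  | zero =>
    intro f g hg
    have := Finset.mem_singleton.mp (Finsupp.support_single_subset hg)
    subst this
    exact ⟨srt_zero g, le_refl _⟩
  | succ n ih =>
    intro f g hg
    rw [piGen_succ] at hg
    refine suppIn_lin (cone' (mv f)) (piL n (bdyGen f))
      (P := fun t => Srt t ∧ Set.range t ⊆ Set.range f)
      (Q := fun t => Srt t ∧ Set.range t ⊆ Set.range f) ?_ ?_ g hg
    · refine suppIn_lin (piL n) (bdyGen f) (P := fun t => ∃ i, t = f ∘ Fin.succAbove i)
        (bdyGen_supp f) ?_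
      rintro t ⟨i, rfl⟩ s hs
      rw [piL_single] at hs
      obtain ⟨h1, h2⟩ := ih (f ∘ Fin.succAbove i) s hs
      exact ⟨h1, h2.trans (Set.range_comp_subset_range _ _)⟩
    · rintro t ⟨hsrt, hsub⟩ s hs
      rw [cone', lcomb_single_one, cone'Gen] at hs
      by_cases hm : mv f ∈ Set.range t
      · rw [if_pos hm] at hs
        simp at hs
      · rw [if_neg hm] at hs
        have hse := Finset.mem_singleton.mp (Finsupp.support_single_subset hs)
        subst hse
        constructor
        · apply srt_cons hsrt
          intro u hu
          rcases mv_le f (hsub hu) with h | h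
          · exact absurd (h ▸ hu) hm
          · exact h
        · rw [Fin.range_cons]
          exact Set.insert_subset (mv_mem f) hsub

lemma hGen_supp : ∀ (n : ℕ) (f : Tup V n), ∀ g ∈ (hGen n f).support,
    Set.range g ⊆ Set.range f := by
  intro n
  induction n with
  | zero =>
    intro f g hg
    simp [hGen] at hg
  | succ n ih =>
    intro f g hg
    classical
    rw [hGen_succ] at hg
    refine suppIn_lin (cone (f 0))
      (Finsupp.single f 1 - piGen (n + 1) f - hL n (bdyGen f))
      (P := fun t => Set.range t ⊆ Set.range f)
      (Q := fun t => Set.range t ⊆ Set.range f) ?_ ?_ g hg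
    · intro t ht
      rcases Finset.mem_union.mp (Finsupp.support_sub ht) with ht1 | ht3
      · rcases Finset.mem_union.mp (Finsupp.support_sub ht1) with ht1 | ht2
        · have := Finset.mem_singleton.mp (Finsupp.support_single_subset ht1)
          subst this
          exact le_refl _
        · exact (piGen_supp (n + 1) f t ht2).2
      · refine suppIn_lin (hL n) (bdyGen f) (P := fun t => ∃ i, t = f ∘ Fin.succAbove i)
          (Q := fun t => Set.range t ⊆ Set.range f) (bdyGen_supp f) ?_ t ht3
        rintro s ⟨i, rfl⟩ u hu
        rw [hL_single] at hu
        exact (ih (f ∘ Fin.succAbove i) u hu).trans (Set.range_comp_subset_range _ _)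
    · intro t hsub s hs
      rw [cone, lcomb_single_one, coneGen] at hs
      have hse := Finset.mem_singleton.mp (Finsupp.support_single_subset hs)
      subst hse
      rw [Fin.range_cons]
      exact Set.insert_subset ⟨0, rfl⟩ hsub

/-! ### Cone' identities -/

noncomputable def aug : Ch V 0 →ₗ[ℤ] ℤ := Finsupp.linearCombination ℤ (fun _ => (1 : ℤ))

lemma fin_one_const {a : Tup V 0} {v : V} (h : v ∈ Set.range a) : a = fun _ => v := by
  obtain ⟨k, hk⟩ := h
  funext i
  have hik : i = k := by omega
  rw [hik, hk]

lemma bdy_cone'Gen_zero (v : V) (a : Tup V 0) :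
    bdy (cone'Gen v a) = Finsupp.single a 1 - Finsupp.single (fun _ => v : Tup V 0) 1 := by
  by_cases hm : v ∈ Set.range a
  · rw [cone'Gen, if_pos hm, map_zero, fin_one_const hm, sub_self]
  · rw [cone'Gen, if_neg hm, bdy_single]
    rw [show bdyGen (Fin.cons v a : Fin 2 → V) =
      ∑ i : Fin 2, ((-1 : ℤ) ^ (i : ℕ)) •
        Finsupp.single ((Fin.cons v a : Fin 2 → V) ∘ i.succAbove) 1 from rfl]
    rw [Fin.sum_univ_two]
    have e0 : (Fin.cons v a : Fin 2 → V) ∘ (Fin.succAbove 0) = a := cons_comp_zero v a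
    have e1 : (Fin.cons v a : Fin 2 → V) ∘ (Fin.succAbove 1) = fun _ => v := by
      funext j
      have hj0 : j = 0 := by omega
      rw [hj0]
      show (Fin.cons v a : Fin 2 → V) ((1 : Fin 2).succAbove 0) = v
      rw [show (1 : Fin 2).succAbove 0 = 0 by decide]
      rw [Fin.cons_zero]
    rw [e0, e1]
    simp [sub_eq_add_neg]

lemma bdy_cone'_zero (v : V) (x : Ch V 0) :
    bdy (cone' v x) = x - (aug x) • Finsupp.single (fun _ => v : Tup V 0) 1 := by
  have h : (bdy.comp (cone' v) : Ch V 0 →ₗ[ℤ] Ch V 0)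
      = LinearMap.id - (LinearMap.toSpanSingleton ℤ (Ch V 0)
          (Finsupp.single (fun _ => v : Tup V 0) 1)).comp aug := by
    apply Finsupp.lhom_ext
    intro a b
    simp only [LinearMap.comp_apply, LinearMap.sub_apply, LinearMap.id_apply,
      LinearMap.toSpanSingleton_apply]
    rw [← Finsupp.smul_single_one, LinearMap.map_smul, LinearMap.map_smul, LinearMap.map_smul]
    rw [cone', lcomb_single_one, bdy_cone'Gen_zero]
    rw [aug, lcomb_single_one, smul_eq_mul, mul_one, smul_sub]
  have h2 := LinearMap.congr_fun h x
  simp only [LinearMap.comp_apply, LinearMap.sub_apply, LinearMap.id_apply,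
    LinearMap.toSpanSingleton_apply] at h2
  exact h2

set_option maxHeartbeats 1000000 in
lemma bdy_cone'Gen {n : ℕ} (v : V) (t : Tup V (n + 1)) (hs : Srt t)
    (hv : ∀ u ∈ Set.range t, u = v ∨ WellOrderingRel v u) :
    bdy (cone'Gen v t) = Finsupp.single t 1 - cone' v (bdyGen t) := by
  by_cases hm : v ∈ Set.range t
  · -- t 0 = v, LHS = 0, and cone' v (bdyGen t) = single t 1
    obtain ⟨k, hk⟩ := hm
    have hk0 : t 0 = v := by
      rcases eq_or_ne k 0 with h0 | h0
      · rw [← hk, h0]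
      · have hlt : (0 : Fin (n + 2)) < k := Fin.pos_of_ne_zero h0
        have h1 := hs 0 k hlt
        rw [hk] at h1
        rcases hv (t 0) ⟨0, rfl⟩ with h2 | h2
        · exact h2
        · exact absurd (trans_of _ h2 h1) (irrefl_of _ _)
    rw [cone'Gen, if_pos ⟨k, hk⟩, map_zero]
    have hsum : cone' v (bdyGen t) = Finsupp.single t 1 := by
      rw [bdyGen, map_sum]
      simp_rw [map_smul]
      have hterm : ∀ i : Fin (n + 2), cone' v (Finsupp.single (t ∘ i.succAbove) 1)
          = cone'Gen v (t ∘ i.succAbove) := fun i => lcomb_single_one _ _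
      rw [Fin.sum_univ_succ]
      have h0 : cone'Gen v (t ∘ (0 : Fin (n + 2)).succAbove) = Finsupp.single t 1 := by
        rw [cone'Gen, if_neg]
        · congr 1
          funext j
          induction j using Fin.cases with
          | zero => rw [Fin.cons_zero, hk0]
          | succ l => rw [Fin.cons_succ]; rfl
        · rintro ⟨j, hj⟩
          have : t ((0 : Fin (n + 2)).succAbove j) = t 0 := by
            show (t ∘ (0 : Fin (n + 2)).succAbove) j = t 0
            rw [hj, hk0]
          have h3 := hs.injective this
          rw [Fin.zero_succAbove] at h3
          exact Fin.succ_ne_zero j h3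
      rw [hterm, h0]
      have hrest : ∀ i : Fin (n + 1),
          ((-1 : ℤ) ^ ((i.succ : Fin (n + 2)) : ℕ)) •
            cone' v (Finsupp.single (t ∘ (i.succ : Fin (n + 2)).succAbove) 1) = 0 := by
        intro i
        rw [hterm, cone'Gen, if_pos, smul_zero]
        refine ⟨0, ?_⟩
        show t ((i.succ : Fin (n + 2)).succAbove 0) = v
        rw [Fin.succAbove_ne_zero_zero (Fin.succ_ne_zero i), hk0]
      rw [Finset.sum_congr rfl (fun i _ => hrest i), Finset.sum_const_zero]
      simp
    rw [hsum, sub_self]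
  · rw [cone'Gen, if_neg hm]
    have : bdy (coneGen v t) = Finsupp.single t 1 - cone v (bdyGen t) := bdy_coneGen v t
    rw [show Finsupp.single (Fin.cons v t : Fin (n + 3) → V) 1 = coneGen v t from rfl, this]
    congr 1
    apply lin_eq_on
    intro g hg
    obtain ⟨i, rfl⟩ := bdyGen_supp t g hg
    rw [cone, lcomb_single_one, cone', lcomb_single_one, coneGen, cone'Gen, if_neg]
    intro hmem
    exact hm (Set.range_comp_subset_range _ _ hmem)

lemma bdy_cone'_chain {n : ℕ} (v : V) (x : Ch V (n + 1))
    (hx : ∀ g ∈ x.support, Srt g ∧ ∀ u ∈ Set.range g, u = v ∨ WellOrderingRel v u) :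
    bdy (cone' v x) = x - cone' v (bdy x) := by
  have h1 : bdy (cone' v x) = (bdy.comp (cone' v)) x := rfl
  have h2 : x - cone' v (bdy x)
      = ((LinearMap.id - (cone' v).comp bdy : Ch V (n + 1) →ₗ[ℤ] Ch V (n + 1))) x := by
    simp only [LinearMap.sub_apply, LinearMap.id_apply, LinearMap.comp_apply]
  rw [h1, h2]
  apply lin_eq_on
  intro g hg
  simp only [LinearMap.comp_apply, LinearMap.sub_apply, LinearMap.id_apply]
  rw [bdy_single]
  rw [show cone' v (Finsupp.single g 1) = cone'Gen v g from lcomb_single_one _ _]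
  exact bdy_cone'Gen v g (hx g hg).1 (hx g hg).2

/-! ### π is a chain map, h is a chain homotopy -/

lemma aug_bdyGen (f : Tup V 1) : aug (bdyGen f) = 0 := by
  rw [show bdyGen f = ∑ i : Fin 2, ((-1 : ℤ) ^ (i : ℕ)) •
      Finsupp.single (f ∘ i.succAbove) 1 from rfl]
  rw [map_sum, Fin.sum_univ_two]
  simp_rw [LinearMap.map_smul]
  rw [show aug (Finsupp.single (f ∘ (0 : Fin 2).succAbove) 1) = 1 from lcomb_single_one _ _,
    show aug (Finsupp.single (f ∘ (1 : Fin 2).succAbove) 1) = 1 from lcomb_single_one _ _]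
  simp

lemma bdy_piGen : ∀ (n : ℕ) (f : Tup V (n + 1)), bdy (piGen (n + 1) f) = piL n (bdyGen f) := by
  intro n
  induction n with
  | zero =>
    intro f
    rw [piGen_succ, piL_zero_apply, bdy_cone'_zero, aug_bdyGen, zero_smul, sub_zero]
  | succ n ih =>
    intro f
    have hcomm : ∀ z : Ch V (n + 1), bdy (piL (n + 1) z) = piL n (bdy z) := by
      intro z
      have : (bdy.comp (piL (n + 1))) z = ((piL n).comp bdy) z := by
        apply lin_eq_on
        intro g _
        simp only [LinearMap.comp_apply]
        rw [piL_single, ih g, bdy_single]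
      simpa using this
    rw [piGen_succ]
    rw [bdy_cone'_chain]
    · rw [hcomm, bdy_bdyGen, map_zero, map_zero, sub_zero]
    · intro g hg
      have hgs := suppIn_lin (piL (n + 1)) (bdyGen f)
        (P := fun t => ∃ i, t = f ∘ Fin.succAbove i)
        (Q := fun t => Srt t ∧ Set.range t ⊆ Set.range f) (bdyGen_supp f) ?_ g hg
      · refine ⟨hgs.1, ?_⟩
        intro u hu
        exact mv_le f (hgs.2 hu)
      · rintro t ⟨i, rfl⟩ s hs
        rw [piL_single] at hs
        obtain ⟨h1, h2⟩ := piGen_supp (n + 1) (f ∘ Fin.succAbove i) s hs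
        exact ⟨h1, h2.trans (Set.range_comp_subset_range _ _)⟩

lemma bdy_hGen : ∀ (n : ℕ) (f : Tup V (n + 1)),
    bdy (hGen (n + 1) f) = Finsupp.single f 1 - piGen (n + 1) f - hL n (bdyGen f) := by
  intro n
  induction n with
  | zero =>
    intro f
    rw [hGen_succ, bdy_cone]
    have hz : bdy ((Finsupp.single f 1 : Ch V 1) - piGen 1 f - hL 0 (bdyGen f)) = 0 := by
      rw [map_sub, map_sub, bdy_single, bdy_piGen 0 f, hL_zero_apply, map_zero, piL_zero_apply,
        sub_self, zero_sub, neg_zero]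
      
    rw [hz, map_zero, sub_zero]
  | succ n ih =>
    intro f
    rw [hGen_succ, bdy_cone]
    have hcomm : ∀ w : Ch V (n + 1), bdy (hL (n + 1) w) =
        w - piL (n + 1) w - hL n (bdy w) := by
      intro w
      have : (bdy.comp (hL (n + 1))) w
          = ((LinearMap.id - piL (n + 1) - (hL n).comp bdy :
              Ch V (n + 1) →ₗ[ℤ] Ch V (n + 1))) w := by
        apply lin_eq_on
        intro g _
        simp only [LinearMap.comp_apply, LinearMap.sub_apply, LinearMap.id_apply]
        rw [hL_single, ih g, piL_single, bdy_single]
      simpa using this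
    have hz : bdy ((Finsupp.single f 1 : Ch V (n + 2)) - piGen (n + 2) f
        - hL (n + 1) (bdyGen f)) = 0 := by
      rw [map_sub, map_sub, bdy_single, bdy_piGen (n + 1) f, hcomm (bdyGen f), bdy_bdyGen,
        map_zero, sub_zero]
      abel
    rw [hz, map_zero, sub_zero]


section Eval

variable {K' : Type*} [TopologicalSpace K'] {G : Type*} [AddCommGroup G]

open Classical in
noncomputable def chat {β : Set (Set K')} {q : ℕ} (c : NerveSimplex β q → G)
    (t : Tup (Set K') q) : G :=
  if h : IsNerveSimplex β t then c ⟨t, h⟩ else 0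

noncomputable def ev {β : Set (Set K')} {q : ℕ} (c : NerveSimplex β q → G) :
    Ch (Set K') q →ₗ[ℤ] G :=
  Finsupp.linearCombination ℤ (chat c)

lemma ev_single {β : Set (Set K')} {q : ℕ} (c : NerveSimplex β q → G) (t : Tup (Set K') q) :
    ev c (Finsupp.single t 1) = chat c t := lcomb_single_one _ _

lemma exists_rel_coboundary {β : Set (Set K')} {A : Set K'} {q : ℕ}
    (c : NerveSimplex β (q + 1) → G) (hc : IsRelCocycle A c)
    (hninj : ¬ ∃ f : Fin (q + 2) → Set K', Function.Injective f ∧ (∀ i, f i ∈ β)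
      ∧ (⋂ i, f i).Nonempty) :
    ∃ b : NerveSimplex β q → G, IsRelCochain A b ∧ ∀ g, cob b g = c g := by
  classical
  refine ⟨fun σ => ev c (hGen q σ.1), ?_, ?_⟩
  · intro σ hσ
    apply lin_eq_zero_on
    intro t ht
    rw [ev_single, chat]
    split
    · rename_i hsx
      apply hc.1
      obtain ⟨x, hx⟩ := hσ
      refine ⟨x, ?_, hx.2⟩
      rw [Set.mem_iInter]
      intro i
      obtain ⟨j, hj⟩ := hGen_supp q σ.1 t ht ⟨i, rfl⟩
      show x ∈ t i
      rw [← hj]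
      exact Set.mem_iInter.1 hx.1 j
    · rfl
  · intro g
    have hcob : cob (fun σ : NerveSimplex β q => ev c (hGen q σ.1)) g
        = ev c (hL q (bdyGen g.1)) := by
      rw [cob, bdyGen, map_sum, map_sum]
      apply Finset.sum_congr rfl
      intro i _
      rw [LinearMap.map_smul, LinearMap.map_smul, hL_single]
      rfl
    rw [hcob]
    have e1 : ev c (Finsupp.single g.1 1) = c g := by
      rw [ev_single, chat, dif_pos g.2]
      rfl
    have e2 : ev c (piGen (q + 1) g.1) = 0 := by
      apply lin_eq_zero_on
      intro t ht
      rw [ev_single, chat]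
      split
      · rename_i hsx
        exact absurd ⟨t, (piGen_supp (q + 1) g.1 t ht).1.injective, hsx.1, hsx.2⟩ hninj
      · rfl
    have e3 : ev c (bdy (hGen (q + 1) g.1)) = 0 := by
      have h4 : ((ev c).comp bdy) (hGen (q + 1) g.1) = 0 := by
        apply lin_eq_zero_on
        intro t ht
        simp only [LinearMap.comp_apply]
        rw [bdy_single]
        have hsub := hGen_supp (q + 1) g.1 t ht
        have hts : IsNerveSimplex β t := by
          constructor
          · intro i
            obtain ⟨j, hj⟩ := hsub ⟨i, rfl⟩
            rw [← hj]; exact g.2.1 j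
          · obtain ⟨x, hx⟩ := g.2.2
            refine ⟨x, Set.mem_iInter.2 fun i => ?_⟩
            obtain ⟨j, hj⟩ := hsub ⟨i, rfl⟩
            rw [← hj]; exact Set.mem_iInter.1 hx j
        have h5 : ev c (bdyGen t) = cob c (⟨t, hts⟩ : NerveSimplex β (q + 1 + 1)) := by
          rw [bdyGen, map_sum]
          delta cob
          apply Finset.sum_congr rfl
          intro i _
          rw [LinearMap.map_smul, ev_single, chat, dif_pos (show IsNerveSimplex β
            (t ∘ i.succAbove) from (face (⟨t, hts⟩ : NerveSimplex β (q + 1 + 1)) i).2)]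
          rfl
        rw [h5]
        exact hc.2 _
      exact h4
    have hsplit : (Finsupp.single g.1 1 : Ch (Set K') (q + 1))
        = bdy (hGen (q + 1) g.1) + piGen (q + 1) g.1 + hL q (bdyGen g.1) := by
      rw [bdy_hGen q g.1]; abel
    rw [← e1, hsplit, map_add, map_add, e2, e3]
    simp

end Eval


end Aux

/-- for every compact metric space `K` and every Abelian group `G`,
`dim_G K ≤ dim K`. -/
theorem cohomDim_le_topDim {K : Type*} [MetricSpace K] [CompactSpace K]
    (G : Type*) [AddCommGroup G] :
    cohomDim G K ≤ topDim K := by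
  rw [cohomDim]
  apply iSup₂_le
  intro q hq
  obtain ⟨A, _, α, hα, hnz⟩ := hq
  cases q with
  | zero =>
    have h0 : ((0 : ℕ) : ℕ∞) = 0 := by norm_num
    rw [h0]
    exact zero_le
  | succ q =>
    have hcov : (((q + 1 : ℕ) : ℕ∞)) ≤ covD α := by
      rw [covD]
      apply le_iInf₂
      intro β hβ
      obtain ⟨hβc, hβr⟩ := hβ
      by_cases hinj : ∃ f : Fin (q + 1 + 1) → Set K, Function.Injective f ∧
          (∀ i, f i ∈ β) ∧ (⋂ i, f i).Nonempty
      · rw [ord]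
        exact le_iSup₂ (f := fun n (_ : n ∈ {n : ℕ | ∃ f : Fin (n + 1) → Set K,
          Function.Injective f ∧ (∀ i, f i ∈ β) ∧ (⋂ i, f i).Nonempty}) => ((n : ℕ∞)))
          (q + 1) hinj
      · exfalso
        obtain ⟨c, hc, hnb⟩ := hnz
        have hex : ∀ V ∈ β, ∃ U ∈ α, V ⊆ U := hβr
        classical
        set r : Set K → Set K := fun V => if h : ∃ U ∈ α, V ⊆ U then h.choose else V
          with hr_def
        have hr : ∀ V ∈ β, V ⊆ r V ∧ r V ∈ α := by
          intro V hV
          have hexV : ∃ U ∈ α, V ⊆ U := hex V hV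
          rw [hr_def]
          simp only [dif_pos hexV]
          obtain ⟨hU1, hU2⟩ := hexV.choose_spec
          exact ⟨hU2, hU1⟩
        apply hnb β hβc hβr r hr
        have hrc : IsRelCocycle A (fun g : NerveSimplex β (q + 1) =>
            c (simplexMap r hr g)) := by
          constructor
          · intro f hf
            apply hc.1
            obtain ⟨x, hx1, hx2⟩ := hf
            refine ⟨x, ?_, hx2⟩
            rw [Set.mem_iInter] at hx1 ⊢
            intro i
            exact (hr _ (f.2.1 i)).1 (hx1 i)
          · intro g
            have hface : ∀ i, simplexMap r hr (face g i) = face (simplexMap r hr g) i :=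
              fun i => rfl
            have hc2 := hc.2 (simplexMap r hr g)
            rw [cob] at hc2 ⊢
            simp_rw [hface]
            exact hc2
        show ∃ b : NerveSimplex β (q + 1 - 1) → G, IsRelCochain A b ∧
          ∀ g, cob b g = c (simplexMap r hr g)
        exact Aux.exists_rel_coboundary _ hrc hinj
    refine hcov.trans ?_
    rw [topDim]
    exact le_iSup₂ (f := fun α (_ : α ∈ {α : Set (Set K) | IsOpenCover α}) => covD α) α hα

end MeanDimPaper
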